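/- Let $b>1$ and let $\alpha$ be the unique solution of $\tan(\alpha\ln b)+2\alpha=0$ in the interval $(\pi/(2\ln b),\,\pi/\ln b)$. For the function $f(x)=x^{-1/2}\big(2\alpha\cos(\alpha\ln x)+\sin(\alpha\ln x)\big)$ on $[1,b]$, equality holds in Hardy's inequality: $\int_1^b\Big(\frac{1}{x}\int_1^x f(t)\,dt\Big)^2 dx = \frac{4}{1+4\alpha^2}\int_1^b f^2(x)\,dx$. -/

import Mathlib

open Real MeasureTheory Set

private lemma hasDerivAt_sin_log (a x : ℝ) (hx : 0 < x) :
    HasDerivAt (fun y => Real.sin (a * Real.log y))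
      (Real.cos (a * Real.log x) * (a * x⁻¹)) x :=
  (Real.hasDerivAt_sin _).comp x ((Real.hasDerivAt_log hx.ne').const_mul a)

private lemma hasDerivAt_cos_log (a x : ℝ) (hx : 0 < x) :
    HasDerivAt (fun y => Real.cos (a * Real.log y))
      (-Real.sin (a * Real.log x) * (a * x⁻¹)) x :=
  (Real.hasDerivAt_cos _).comp x ((Real.hasDerivAt_log hx.ne').const_mul a)

private lemma contOn_sin_log (a b : ℝ) (hb : 1 < b) :
    ContinuousOn (fun x : ℝ => Real.sin (a * Real.log x)) (Set.Icc 1 b) := by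
  have hlog : ContinuousOn Real.log (Set.Icc (1:ℝ) b) :=
    Real.continuousOn_log.mono (fun x hx => by
      simpa using (ne_of_gt (lt_of_lt_of_le one_pos hx.1)))
  exact Real.continuous_sin.comp_continuousOn (continuousOn_const.mul hlog)

private lemma contOn_cos_log (a b : ℝ) (hb : 1 < b) :
    ContinuousOn (fun x : ℝ => Real.cos (a * Real.log x)) (Set.Icc 1 b) := by
  have hlog : ContinuousOn Real.log (Set.Icc (1:ℝ) b) :=
    Real.continuousOn_log.mono (fun x hx => by
      simpa using (ne_of_gt (lt_of_lt_of_le one_pos hx.1)))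
  exact Real.continuous_cos.comp_continuousOn (continuousOn_const.mul hlog)

theorem hardy_equality_extremal_function (b : ℝ) (hb : 1 < b) (α : ℝ)
    (hα : α ∈ Set.Ioo (π / (2 * Real.log b)) (π / Real.log b))
    (hroot : Real.tan (α * Real.log b) + 2 * α = 0)
    (f : ℝ → ℝ)
    (hf : ∀ x ∈ Set.Icc 1 b,
      f x = x ^ (-(1 : ℝ) / 2) *
        (2 * α * Real.cos (α * Real.log x) + Real.sin (α * Real.log x))) :
    ∫ x in (1 : ℝ)..b, ((1 / x) * ∫ t in (1 : ℝ)..x, f t) ^ 2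
      = (4 / (1 + 4 * α ^ 2)) * ∫ x in (1 : ℝ)..b, f x ^ 2 := by
  have hL : 0 < Real.log b := Real.log_pos hb
  have hα0 : 0 < α := lt_trans (by positivity) hα.1
  have hαne : α ≠ 0 := hα0.ne'
  -- the root condition
  have h1 : π / 2 < α * Real.log b := by
    have := (div_lt_iff₀ (by positivity : (0:ℝ) < 2 * Real.log b)).mp hα.1
    nlinarith
  have h2 : α * Real.log b < π := (lt_div_iff₀ hL).mp hα.2
  have hcosneg : Real.cos (α * Real.log b) < 0 :=
    Real.cos_neg_of_pi_div_two_lt_of_lt h1 (by linarith [Real.pi_pos])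
  have hcosne : Real.cos (α * Real.log b) ≠ 0 := ne_of_lt hcosneg
  have hsin : Real.sin (α * Real.log b) = -(2*α) * Real.cos (α * Real.log b) := by
    rw [Real.tan_eq_sin_div_cos] at hroot
    field_simp at hroot
    linarith
  -- the inner integral
  have hinner : ∀ x ∈ Set.Icc (1:ℝ) b,
      (∫ t in (1:ℝ)..x, f t) = 2 * (x ^ ((1:ℝ)/2) * Real.sin (α * Real.log x)) := by
    intro x hx
    have hx1 : (1:ℝ) ≤ x := hx.1
    have hcont : ContinuousOn (fun t : ℝ => t ^ (-(1:ℝ)/2) *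
        (2*α*Real.cos (α*Real.log t) + Real.sin (α*Real.log t))) (Set.Icc 1 b) := by
      apply ContinuousOn.mul
      · exact ContinuousOn.rpow_const continuousOn_id
          (fun t ht => Or.inl (ne_of_gt (lt_of_lt_of_le one_pos ht.1)))
      · exact (continuousOn_const.mul (contOn_cos_log α b hb)).add (contOn_sin_log α b hb)
    have hsub : Set.Icc (1:ℝ) x ⊆ Set.Icc 1 b := Set.Icc_subset_Icc le_rfl hx.2
    have hint : IntervalIntegrable f volume 1 x := by
      rw [intervalIntegrable_iff_integrableOn_Icc_of_le hx1]
      exact ((hcont.mono hsub).integrableOn_Icc).congr_fun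
        (fun t ht => (hf t (hsub ht)).symm) measurableSet_Icc
    have key : ∀ t ∈ Set.uIcc (1:ℝ) x,
        HasDerivAt (fun y => 2 * (y ^ ((1:ℝ)/2) * Real.sin (α * Real.log y))) (f t) t := by
      intro t ht
      rw [Set.uIcc_of_le hx1] at ht
      have ht0 : 0 < t := lt_of_lt_of_le one_pos ht.1
      have hd := (((Real.hasDerivAt_rpow_const (p := (1:ℝ)/2) (Or.inl ht0.ne')).mul
        (hasDerivAt_sin_log α t ht0)).const_mul 2)
      have e1 : t ^ ((1:ℝ)/2 - 1) = t ^ (-(1:ℝ)/2) := by norm_num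
      have e2 : t ^ ((1:ℝ)/2) * t⁻¹ = t ^ (-(1:ℝ)/2) := by
        rw [← Real.rpow_neg_one, ← Real.rpow_add ht0]; norm_num
      rw [hf t (hsub ht)]
      refine hd.congr_deriv (Eq.symm ?_)
      rw [e1, show t ^ ((1:ℝ)/2) * (Real.cos (α*Real.log t) * (α * t⁻¹))
          = t ^ (-(1:ℝ)/2) * (α * Real.cos (α * Real.log t)) from by rw [← e2]; ring]
      ring
    rw [intervalIntegral.integral_eq_sub_of_hasDerivAt key hint]
    simp
  -- rewrite LHS integrand
  have hLHS : (∫ x in (1:ℝ)..b, ((1/x) * ∫ t in (1:ℝ)..x, f t) ^ 2)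
      = ∫ x in (1:ℝ)..b, 4 * Real.sin (α * Real.log x) ^ 2 / x := by
    apply intervalIntegral.integral_congr
    intro x hx
    rw [Set.uIcc_of_le hb.le] at hx
    have hx0 : 0 < x := lt_of_lt_of_le one_pos hx.1
    dsimp only
    rw [hinner x hx]
    have hsq : x ^ ((1:ℝ)/2) * x ^ ((1:ℝ)/2) = x := by
      rw [← Real.rpow_add hx0]; norm_num
    have : ((1/x) * (2 * (x ^ ((1:ℝ)/2) * Real.sin (α * Real.log x)))) ^ 2
        = 4 * (x ^ ((1:ℝ)/2) * x ^ ((1:ℝ)/2)) * Real.sin (α * Real.log x) ^ 2 / x ^ 2 := by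
      ring
    rw [this, hsq]
    field_simp
  -- rewrite RHS integrand
  have hRHS : (∫ x in (1:ℝ)..b, f x ^ 2)
      = ∫ x in (1:ℝ)..b,
          (2*α*Real.cos (α*Real.log x) + Real.sin (α*Real.log x)) ^ 2 / x := by
    apply intervalIntegral.integral_congr
    intro x hx
    rw [Set.uIcc_of_le hb.le] at hx
    have hx0 : 0 < x := lt_of_lt_of_le one_pos hx.1
    dsimp only
    rw [hf x hx]
    have e : x ^ (-(1:ℝ)/2) * x ^ (-(1:ℝ)/2) = x⁻¹ := by
      rw [← Real.rpow_add hx0, ← Real.rpow_neg_one]; norm_num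
    rw [mul_pow, sq (x ^ (-(1:ℝ)/2)), e]
    ring
  -- FTC for LHS
  have hFTC1 : (∫ x in (1:ℝ)..b, 4 * Real.sin (α * Real.log x) ^ 2 / x)
      = (2 * Real.log b - α⁻¹ * Real.sin (2*α*Real.log b))
        - (2 * Real.log 1 - α⁻¹ * Real.sin (2*α*Real.log 1)) := by
    apply intervalIntegral.integral_eq_sub_of_hasDerivAt
    · intro x hx
      rw [Set.uIcc_of_le hb.le] at hx
      have hx0 : 0 < x := lt_of_lt_of_le one_pos hx.1
      have hd := ((Real.hasDerivAt_log hx0.ne').const_mul 2).sub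
        ((hasDerivAt_sin_log (2*α) x hx0).const_mul α⁻¹)
      refine hd.congr_deriv (Eq.symm ?_)
      have hc : Real.cos (2*α*Real.log x) = 1 - 2 * Real.sin (α * Real.log x) ^ 2 := by
        rw [mul_assoc, Real.cos_two_mul]
        nlinarith [Real.sin_sq_add_cos_sq (α * Real.log x)]
      rw [hc]
      field_simp
      ring
    · have hcont : ContinuousOn (fun x : ℝ => 4 * Real.sin (α * Real.log x) ^ 2 / x)
          (Set.Icc 1 b) := by
        apply ContinuousOn.div
        · exact continuousOn_const.mul ((contOn_sin_log α b hb).pow 2)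
        · exact continuousOn_id
        · exact fun x hx => ne_of_gt (lt_of_lt_of_le one_pos hx.1)
      exact (by rwa [Set.uIcc_of_le hb.le] : ContinuousOn _ (Set.uIcc (1:ℝ) b)).intervalIntegrable
  -- FTC for RHS
  have hFTC2 : (∫ x in (1:ℝ)..b,
        (2*α*Real.cos (α*Real.log x) + Real.sin (α*Real.log x)) ^ 2 / x)
      = ((2*α^2 + 1/2) * Real.log b + (2*α^2 - 1/2)/(2*α) * Real.sin (2*α*Real.log b)
          - Real.cos (2*α*Real.log b))
        - ((2*α^2 + 1/2) * Real.log 1 + (2*α^2 - 1/2)/(2*α) * Real.sin (2*α*Real.log 1)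
          - Real.cos (2*α*Real.log 1)) := by
    apply intervalIntegral.integral_eq_sub_of_hasDerivAt
    · intro x hx
      rw [Set.uIcc_of_le hb.le] at hx
      have hx0 : 0 < x := lt_of_lt_of_le one_pos hx.1
      have hd := (((Real.hasDerivAt_log hx0.ne').const_mul (2*α^2 + 1/2)).add
        ((hasDerivAt_sin_log (2*α) x hx0).const_mul ((2*α^2 - 1/2)/(2*α)))).sub
        (hasDerivAt_cos_log (2*α) x hx0)
      refine hd.congr_deriv (Eq.symm ?_)
      have hc : Real.cos (2*α*Real.log x) = 2 * Real.cos (α * Real.log x) ^ 2 - 1 := by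
        rw [mul_assoc]; exact Real.cos_two_mul _
      have hs : Real.sin (2*α*Real.log x)
          = 2 * Real.sin (α * Real.log x) * Real.cos (α * Real.log x) := by
        rw [mul_assoc]; exact Real.sin_two_mul _
      have hpyth := Real.sin_sq_add_cos_sq (α * Real.log x)
      rw [hc, hs]
      field_simp
      linear_combination 2 * hpyth
    · have hcont : ContinuousOn (fun x : ℝ =>
          (2*α*Real.cos (α*Real.log x) + Real.sin (α*Real.log x)) ^ 2 / x)
          (Set.Icc 1 b) := by
        apply ContinuousOn.div
        · exact (((continuousOn_const.mul (contOn_cos_log α b hb)).add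
            (contOn_sin_log α b hb)).pow 2)
        · exact continuousOn_id
        · exact fun x hx => ne_of_gt (lt_of_lt_of_le one_pos hx.1)
      exact (by rwa [Set.uIcc_of_le hb.le] : ContinuousOn _ (Set.uIcc (1:ℝ) b)).intervalIntegrable
  rw [hLHS, hRHS, hFTC1, hFTC2]
  simp only [Real.log_one, mul_zero, Real.sin_zero, Real.cos_zero]
  -- final algebra
  have hpyth := Real.sin_sq_add_cos_sq (α * Real.log b)
  rw [hsin] at hpyth
  have hc2 : Real.cos (α * Real.log b) ^ 2 = 1 / (1 + 4*α^2) := by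
    field_simp
    linear_combination hpyth
  have e1 : Real.sin (2*α*Real.log b) = -(4*α) * Real.cos (α * Real.log b) ^ 2 := by
    rw [mul_assoc, Real.sin_two_mul, hsin]; ring
  have e2 : Real.cos (2*α*Real.log b) = 2 * Real.cos (α * Real.log b) ^ 2 - 1 := by
    rw [mul_assoc]; exact Real.cos_two_mul _
  rw [e1, e2, hc2]
  have hD : (1:ℝ) + 4*α^2 ≠ 0 := by positivity
  field_simp
  ring
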